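/- arXiv:2308.16749 — 2 statements merged into one kernel-verified Lean document; each statement's English description precedes it below -/
import Mathlib

section
/- For every integer i ≥ 0, the polynomial identity e_i = Σ_{j=0}^{i} s_{i,j} · R_j holds in F[z], where s_{i,j} = (−1)^{i+j} [i+1+j]! / ([i−j]! [2j+1]!). -/
open Finset

noncomputable section

/-- The field `F = ℚ(𝔮)` of rational functions over `ℚ` in an indeterminate `𝔮`. -/
abbrev F : Type := RatFunc ℚ

/-- The indeterminate `𝔮`. -/
noncomputable def qv : F := RatFunc.X

/-- `{n} = 𝔮^n - 𝔮^{-n}` for `n : ℤ`. -/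
def brc (n : ℤ) : F := qv ^ n - qv ^ (-n)

/-- `[n] = {n}/{1}`. -/
def brk (n : ℤ) : F := brc n / brc 1

/-- `{n}! = ∏_{j=1}^n {j}`. -/
def brcFac (n : ℕ) : F := ∏ j ∈ Finset.range n, brc ((j : ℤ) + 1)

/-- `[n]! = ∏_{j=1}^n [j]`. -/
def brkFac (n : ℕ) : F := ∏ j ∈ Finset.range n, brk ((j : ℤ) + 1)

/-- `q = 𝔮²`. -/
def qq : F := qv ^ 2

/-- The q-Pochhammer symbol `(x; q)_k = ∏_{j=0}^{k-1} (1 - x q^j)`. -/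
def poch (x : F) (k : ℕ) : F := ∏ j ∈ Finset.range k, (1 - x * qq ^ j)

/-- The q-binomial coefficient `[n choose i]_q`. -/
def qbinom (n i : ℕ) : F := poch qq n / (poch qq i * poch qq (n - i))

/-- The Chebyshev-like basis `e_i` of `F[z]`: `e_0 = 1`, `e_1 = z`, `e_i = z e_{i-1} - e_{i-2}`. -/
noncomputable def e : ℕ → Polynomial F
  | 0 => 1
  | 1 => Polynomial.X
  | (i + 2) => Polynomial.X * e (i + 1) - e i

/-- `λ_i = -𝔮^{i+1} - 𝔮^{-i-1}`. -/
def lam (i : ℤ) : F := -qv ^ (i + 1) - qv ^ (-(i + 1))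

/-- `R_n = ∏_{i=0}^{n-1} (z - λ_{2i})`. -/
noncomputable def R (n : ℕ) : Polynomial F :=
  ∏ i ∈ Finset.range n, (Polynomial.X - Polynomial.C (lam (2 * (i : ℤ))))

/-- `s_{i,j} = (-1)^{i+j} [i+1+j]! / ([i-j]! [2j+1]!)` for `0 ≤ j ≤ i`. -/
def scoef (i j : ℕ) : F :=
  (-1) ^ (i + j) * brkFac (i + 1 + j) / (brkFac (i - j) * brkFac (2 * j + 1))



lemma hq : qv ≠ 0 := RatFunc.X_ne_zero

lemma qv_pow_ne_one (k : ℕ) (hk : k ≠ 0) : qv ^ k ≠ 1 := by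
  intro h
  have h2 : (algebraMap (Polynomial ℚ) F) (Polynomial.X ^ k) = (algebraMap (Polynomial ℚ) F) 1 := by
    simpa [qv, RatFunc.algebraMap_X] using h
  have h3 := RatFunc.algebraMap_injective ℚ h2
  have := congrArg (Polynomial.eval 0) h3
  simp [hk] at this

lemma qv_zpow_ne_one (m : ℤ) (hm : m ≠ 0) : qv ^ m ≠ 1 := by
  rcases lt_or_gt_of_ne hm with h | h
  · intro he
    have : qv ^ (-m) = 1 := by
      rw [← inv_eq_one, ← zpow_neg] at he; simpa [neg_neg] using he
    rw [show -m = ((-m).toNat : ℤ) by omega, zpow_natCast] at this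
    exact qv_pow_ne_one _ (by omega) this
  · intro he
    rw [show m = (m.toNat : ℤ) by omega, zpow_natCast] at he
    exact qv_pow_ne_one _ (by omega) he

lemma brc_ne_zero (n : ℤ) (hn : n ≠ 0) : brc n ≠ 0 := by
  unfold brc
  rw [sub_ne_zero]
  intro h
  have : qv ^ (n + n) = 1 := by
    rw [zpow_add₀ hq]; nth_rewrite 1 [h]; rw [← zpow_add₀ hq, neg_add_cancel, zpow_zero]
  exact qv_zpow_ne_one _ (by omega) this

lemma brc1_ne : brc 1 ≠ 0 := brc_ne_zero 1 one_ne_zero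

lemma brk_ne_zero (n : ℤ) (hn : n ≠ 0) : brk n ≠ 0 :=
  div_ne_zero (brc_ne_zero n hn) brc1_ne

lemma brkFac_succ (n : ℕ) : brkFac (n + 1) = brkFac n * brk ((n : ℤ) + 1) :=
  Finset.prod_range_succ _ n

lemma brkFac_zero : brkFac 0 = 1 := Finset.prod_range_zero _

lemma brkFac_one : brkFac 1 = 1 := by
  rw [show (1:ℕ) = 0 + 1 from rfl, brkFac_succ, brkFac_zero, one_mul]
  simp [brk, div_self brc1_ne]

lemma brkFac_ne_zero (n : ℕ) : brkFac n ≠ 0 := by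
  unfold brkFac
  rw [Finset.prod_ne_zero_iff]
  exact fun j _ => brk_ne_zero _ (by positivity)

-- pp machinery
noncomputable def pp (m : ℤ) : F := qv ^ m + qv ^ (-m)

lemma pp_mul (x y : ℤ) : pp x * pp y = pp (x + y) + pp (x - y) := by
  simp only [pp, zpow_add₀ hq, zpow_sub₀ hq, neg_add, neg_sub, zpow_neg]
  ring

lemma brc_mul (x y : ℤ) : brc x * brc y = pp (x + y) - pp (x - y) := by
  simp only [pp, brc, zpow_add₀ hq, zpow_sub₀ hq, neg_add, neg_sub, zpow_neg]
  ring

lemma pp_brc (x y : ℤ) : pp x * brc y = brc (x + y) + brc (y - x) := by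
  simp only [pp, brc, zpow_add₀ hq, zpow_sub₀ hq, neg_add, neg_sub, zpow_neg]
  ring

lemma lam_eq (m : ℤ) : lam m = -pp (m + 1) := by
  simp only [lam, pp]; ring

lemma pp_neg (m : ℤ) : pp (-m) = pp m := by
  simp only [pp, neg_neg]; ring

lemma brc_zero : brc 0 = 0 := by simp [brc]

-- key brc identity for the generic recurrence
lemma key_brc (j d : ℤ) :
    brc (2*j+d+5) * brc (2*j+d+4) =
      brc (2*j+3) * brc (2*j+2) - lam (2*j+2) * brc (2*j+d+4) * brc (d+2)
        - brc (d+2) * brc (d+1) := by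
  have A1 : brc (2*j+d+5) * brc (2*j+d+4) = pp (4*j+2*d+9) - pp 1 := by
    rw [brc_mul, show (2*j+d+5)+(2*j+d+4) = 4*j+2*d+9 by ring,
      show (2*j+d+5)-(2*j+d+4) = 1 by ring]
  have A2 : brc (2*j+3) * brc (2*j+2) = pp (4*j+5) - pp 1 := by
    rw [brc_mul, show (2*j+3)+(2*j+2) = 4*j+5 by ring, show (2*j+3)-(2*j+2) = 1 by ring]
  have A3 : brc (2*j+d+4) * brc (d+2) = pp (2*j+2*d+6) - pp (2*j+2) := by
    rw [brc_mul, show (2*j+d+4)+(d+2) = 2*j+2*d+6 by ring,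
      show (2*j+d+4)-(d+2) = 2*j+2 by ring]
  have A6 : brc (d+2) * brc (d+1) = pp (2*d+3) - pp 1 := by
    rw [brc_mul, show (d+2)+(d+1) = 2*d+3 by ring, show (d+2)-(d+1) = 1 by ring]
  have L : lam (2*j+2) = -pp (2*j+3) := by
    rw [lam_eq, show (2*j+2)+1 = 2*j+3 by ring]
  have T4 : pp (2*j+3) * pp (2*j+2*d+6) = pp (4*j+2*d+9) + pp (2*d+3) := by
    rw [pp_mul, show (2*j+3)+(2*j+2*d+6) = 4*j+2*d+9 by ring,
      show (2*j+3)-(2*j+2*d+6) = -(2*d+3) by ring, pp_neg]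
  have T5 : pp (2*j+3) * pp (2*j+2) = pp (4*j+5) + pp 1 := by
    rw [pp_mul, show (2*j+3)+(2*j+2) = 4*j+5 by ring, show (2*j+3)-(2*j+2) = 1 by ring]
  linear_combination A1 - A2 + A6 + (brc (2*j+d+4) * brc (d+2)) * L
    + (-pp (2*j+3)) * A3 - T4 + T5

-- key brk identity
lemma key_brk (j d : ℤ) :
    brk (2*j+d+5) * brk (2*j+d+4) =
      brk (2*j+3) * brk (2*j+2) - lam (2*j+2) * brk (2*j+d+4) * brk (d+2)
        - brk (d+2) * brk (d+1) := by
  simp only [brk]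
  linear_combination ((brc 1)⁻¹^2) * key_brc j d


lemma scoef_self (i : ℕ) : scoef i i = 1 := by
  unfold scoef
  rw [show i - i = 0 from by omega, brkFac_zero, show i + 1 + i = 2*i+1 from by omega,
    Even.neg_one_pow (⟨i, rfl⟩ : Even (i + i)), one_mul]
  exact div_self (brkFac_ne_zero _)

lemma scoef_zero (i : ℕ) : scoef i 0 = (-1)^i * brk ((i:ℤ)+1) := by
  unfold scoef
  rw [show i + 1 + 0 = i + 1 from by omega, brkFac_succ, show i - 0 = i from rfl,
    show 2*0+1 = 1 from rfl, brkFac_one, add_zero, mul_one]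
  field_simp [brkFac_ne_zero]

lemma scoef_top (i : ℕ) : scoef (i+1) i = -brk (2*(i:ℤ)+2) := by
  unfold scoef
  rw [show i + 1 + 1 + i = (2*i+1) + 1 from by omega, brkFac_succ,
    show i + 1 - i = 1 from by omega, brkFac_one,
    Odd.neg_one_pow (by exact ⟨i, by omega⟩ : Odd (i + 1 + i)), one_mul]
  push_cast
  rw [div_eq_iff (brkFac_ne_zero _)]
  ring

lemma sc00 (i : ℕ) : scoef (i+2) 0 = lam 0 * scoef (i+1) 0 - scoef i 0 := by
  have key : brc ((i:ℤ)+3) = -lam 0 * brc ((i:ℤ)+2) - brc ((i:ℤ)+1) := by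
    have h := pp_brc 1 ((i:ℤ)+2)
    rw [show (1:ℤ) + ((i:ℤ)+2) = (i:ℤ)+3 by ring, show ((i:ℤ)+2) - 1 = (i:ℤ)+1 by ring] at h
    rw [lam_eq, show (0:ℤ)+1 = 1 by ring]
    linear_combination -h
  rw [scoef_zero, scoef_zero, scoef_zero]
  push_cast
  simp only [brk]
  rw [show ((i:ℤ)+2+1) = (i:ℤ)+3 by ring, show ((i:ℤ)+1+1) = (i:ℤ)+2 by ring]
  field_simp [brc1_ne]
  linear_combination ((-1:F)^i) * key

lemma subtop (i : ℕ) : scoef (i+2) (i+1) = scoef (i+1) i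
    + lam (2*((i:ℤ)+1)) * scoef (i+1) (i+1) := by
  have key : brc (2*(i:ℤ)+4) = brc (2*(i:ℤ)+2) - lam (2*(i:ℤ)+2) * brc 1 := by
    have h := pp_brc (2*(i:ℤ)+3) 1
    rw [show (2*(i:ℤ)+3) + 1 = 2*(i:ℤ)+4 by ring,
      show (1:ℤ) - (2*(i:ℤ)+3) = -(2*(i:ℤ)+2) by ring] at h
    have hb : brc (-(2*(i:ℤ)+2)) = -brc (2*(i:ℤ)+2) := by
      simp only [brc, neg_neg]; ring
    rw [hb] at h
    rw [lam_eq, show (2*(i:ℤ)+2)+1 = 2*(i:ℤ)+3 by ring]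
    linear_combination -h
  rw [show i+2 = (i+1)+1 from rfl, scoef_top, scoef_top, scoef_self, mul_one]
  push_cast
  simp only [brk]
  rw [show 2*((i:ℤ)+1)+2 = 2*(i:ℤ)+4 by ring, show 2*((i:ℤ)+1) = 2*(i:ℤ)+2 by ring]
  field_simp [brc1_ne]
  linear_combination -key

lemma generic (j d : ℕ) :
    scoef (j+1+d+2) (j+1) = scoef (j+1+d+1) j
      + lam (2*((j:ℤ)+1)) * scoef (j+1+d+1) (j+1) - scoef (j+1+d) (j+1) := by
  unfold scoef
  ring_nf
  have h2 : ((-1:F))^(j*2) = 1 := by rw [mul_comm, pow_mul]; norm_num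
  rw [h2,
    show 3+j+d-(1+j) = d+1+1 from by omega,
    show 1+j+d-(1+j) = d from by omega,
    show 2+j+d-(1+j) = d+1 from by omega,
    show 2+j+d-j = d+1+1 from by omega,
    show 5+j*2+d = d+3+j*2+1+1 from by omega,
    show 4+j*2+d = d+3+j*2+1 from by omega,
    show 3+j*2+d = d+3+j*2 from by omega,
    show 3+j*2 = 1+j*2+1+1 from by omega]
  simp only [brkFac_succ]
  push_cast
  ring_nf
  have key := key_brk (j:ℤ) (d:ℤ)
  rw [show 2*(j:ℤ)+(d:ℤ)+5 = 5+(d:ℤ)+(j:ℤ)*2 by ring,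
      show 2*(j:ℤ)+(d:ℤ)+4 = 4+(d:ℤ)+(j:ℤ)*2 by ring,
      show 2*(j:ℤ)+3 = 3+(j:ℤ)*2 by ring,
      show 2*(j:ℤ)+2 = 2+(j:ℤ)*2 by ring,
      show (d:ℤ)+2 = 2+(d:ℤ) by ring,
      show (d:ℤ)+1 = 1+(d:ℤ) by ring] at key
  have n1 : brk (1+(d:ℤ)) ≠ 0 := brk_ne_zero _ (by omega)
  have n2 : brk (2+(d:ℤ)) ≠ 0 := brk_ne_zero _ (by omega)
  have n3 : brk (2+(j:ℤ)*2) ≠ 0 := brk_ne_zero _ (by omega)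
  have n4 : brk (3+(j:ℤ)*2) ≠ 0 := brk_ne_zero _ (by omega)
  have n5 : brk (4+(d:ℤ)+(j:ℤ)*2) ≠ 0 := brk_ne_zero _ (by omega)
  have n6 : brk (5+(d:ℤ)+(j:ℤ)*2) ≠ 0 := brk_ne_zero _ (by omega)
  have m1 : brkFac d ≠ 0 := brkFac_ne_zero d
  have m2 : brkFac (1+j*2) ≠ 0 := brkFac_ne_zero _
  have m3 : brkFac (3+d+j*2) ≠ 0 := brkFac_ne_zero _
  have hD1 : brkFac d * brk (1 + (d:ℤ)) * brkFac (1 + j * 2) * brk (2 + (j:ℤ) * 2)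
      * brk (3 + (j:ℤ) * 2) ≠ 0 := by
    exact mul_ne_zero (mul_ne_zero (mul_ne_zero (mul_ne_zero m1 n1) m2) n3) n4
  have hD2 : brkFac d * brk (1 + (d:ℤ)) * brk (2 + (d:ℤ)) * brkFac (1 + j * 2) *
      (brkFac d * brkFac (1 + j * 2) * brk (2 + (j:ℤ) * 2) * brk (3 + (j:ℤ) * 2)) ≠ 0 := by
    exact mul_ne_zero (mul_ne_zero (mul_ne_zero (mul_ne_zero m1 n1) n2) m2)
      (mul_ne_zero (mul_ne_zero (mul_ne_zero m1 m2) n3) n4)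
  have hQ : brkFac d * brk (1+(d:ℤ)) * brk (2+(d:ℤ)) * brkFac (1+j*2) * brk (2+(j:ℤ)*2)
      * brk (3+(j:ℤ)*2) ≠ 0 := by
    exact mul_ne_zero (mul_ne_zero (mul_ne_zero (mul_ne_zero (mul_ne_zero m1 n1) n2) m2) n3) n4
  field_simp
  linear_combination key

lemma generic' (i j : ℕ) (h : j + 1 ≤ i) :
    scoef (i+2) (j+1) = scoef (i+1) j
      + lam (2*((j:ℤ)+1)) * scoef (i+1) (j+1) - scoef i (j+1) := by
  obtain ⟨d, rfl⟩ : ∃ d, i = j + 1 + d := ⟨i - (j+1), by omega⟩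
  exact generic j d

lemma scoef_one_zero : scoef 1 0 = lam 0 := by
  rw [scoef_zero]
  have h := pp_brc 1 1
  rw [show (1:ℤ)+1 = 2 by ring, show (1:ℤ)-1 = 0 by ring, brc_zero, add_zero] at h
  rw [lam_eq, show (0:ℤ)+1 = 1 by ring]
  simp only [brk]
  push_cast
  field_simp [brc1_ne]
  linear_combination h

lemma R_succ (n : ℕ) : R (n+1) = R n * (Polynomial.X - Polynomial.C (lam (2*(n:ℤ)))) :=
  Finset.prod_range_succ _ n

lemma R_zero : R 0 = 1 := Finset.prod_range_zero _


/-- For every `i ≥ 0`, `e_i = Σ_{j=0}^i s_{i,j} R_j` in `F[z]`. -/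
theorem stmt1 (i : ℕ) :
    e i = ∑ j ∈ Finset.range (i + 1), Polynomial.C (scoef i j) * R j := by
  induction i using Nat.twoStepInduction with
  | zero =>
    simp [e, R_zero, scoef_self]
  | one =>
    rw [Finset.sum_range_succ, Finset.sum_range_one, R_succ, R_zero, scoef_self,
      scoef_one_zero]
    simp only [e, map_one, one_mul, Nat.cast_zero]
    ring
  | more n ih ih1 =>
    rw [show e (n+2) = Polynomial.X * e (n+1) - e n from rfl, ih, ih1]
    have h1 : Polynomial.X * (∑ j ∈ Finset.range (n+2), Polynomial.C (scoef (n+1) j) * R j)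
        = (∑ j ∈ Finset.range (n+2), Polynomial.C (scoef (n+1) j) * R (j+1))
          + ∑ j ∈ Finset.range (n+2),
              Polynomial.C (scoef (n+1) j) * Polynomial.C (lam (2*(j:ℤ))) * R j := by
      rw [Finset.mul_sum, ← Finset.sum_add_distrib]
      exact Finset.sum_congr rfl fun k _ => by rw [R_succ]; ring
    rw [h1]
    rw [Finset.sum_range_succ' (fun j => Polynomial.C (scoef (n+2) j) * R j) (n+2),
        Finset.sum_range_succ' (fun j => Polynomial.C (scoef (n+1) j)
          * Polynomial.C (lam (2*(j:ℤ))) * R j) (n+1),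
        Finset.sum_range_succ' (fun j => Polynomial.C (scoef n j) * R j) n]
    rw [Finset.sum_range_succ (fun j => Polynomial.C (scoef (n+2) (j+1)) * R (j+1)) (n+1),
        Finset.sum_range_succ (fun j => Polynomial.C (scoef (n+2) (j+1)) * R (j+1)) n,
        Finset.sum_range_succ (fun j => Polynomial.C (scoef (n+1) j) * R (j+1)) (n+1),
        Finset.sum_range_succ (fun j => Polynomial.C (scoef (n+1) j) * R (j+1)) n,
        Finset.sum_range_succ (fun j => Polynomial.C (scoef (n+1) (j+1))
          * Polynomial.C (lam (2*((j+1:ℕ):ℤ))) * R (j+1)) n]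
    have hmain : ∑ j ∈ Finset.range n, Polynomial.C (scoef (n+2) (j+1)) * R (j+1)
        = ∑ j ∈ Finset.range n, (Polynomial.C (scoef (n+1) j) * R (j+1)
            + Polynomial.C (scoef (n+1) (j+1))
              * Polynomial.C (lam (2*((j+1:ℕ):ℤ))) * R (j+1)
            - Polynomial.C (scoef n (j+1)) * R (j+1)) := by
      refine Finset.sum_congr rfl fun k hk => ?_
      have hk' : k + 1 ≤ n := by simpa using hk
      rw [generic' n k hk']
      push_cast
      simp only [map_add, map_sub, map_mul]
      ring
    rw [hmain, Finset.sum_sub_distrib, Finset.sum_add_distrib]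
    have e1 : scoef (n+2) (n+1+1) = scoef (n+1) (n+1) := by
      rw [show n+1+1 = n+2 from rfl, scoef_self, scoef_self]
    have e2 : scoef (n+2) (n+1) = scoef (n+1) n
        + lam (2*((n+1:ℕ):ℤ)) * scoef (n+1) (n+1) := by
      push_cast
      exact subtop n
    have e3 : scoef (n+2) 0 = lam (2*((0:ℕ):ℤ)) * scoef (n+1) 0 - scoef n 0 := by
      push_cast
      simpa using sc00 n
    rw [e1, e2, e3]
    simp only [map_add, map_sub, map_mul]
    ring
end
end

section
/- Let α : ℕ → F be any sequence and for n ≥ 0 set B_n = (q;q)_n · Σ_{l=0}^{n} α_l / ((q;q)_{n−l} (q;q)_{n+l+1}). Then for every integer p ≥ 1 and every integer k ≥ 0, (q;q)_k · Σ_{l=0}^{k} q^{(l²+l)(p−1)} α_l / ((q;q)_{k−l} (q;q)_{k+l+1}) = Σ_{k = k_p ≥ k_{p−1} ≥ ⋯ ≥ k_1 ≥ 0} (∏_{i=1}^{p−1} q^{k_i² + k_i} [k_{i+1} choose k_i]_q) · B_{k_1}, the sum being over all chains of length p ending at k. -/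
open Finset

noncomputable section

/-- Chains `k = k_p ≥ k_{p-1} ≥ ⋯ ≥ k_1 ≥ 0` of length `p` ending at `k`,
encoded as monotone functions `Fin p → Fin (k+1)` whose last value is `k`
(the function at index `i` gives `k_{i+1}`). -/
def chains (p k : ℕ) : Finset (Fin p → Fin (k + 1)) :=
  Finset.univ.filter fun g =>
    (∀ i j : Fin p, i ≤ j → g i ≤ g j) ∧ ∀ i : Fin p, (i : ℕ) = p - 1 → (g i : ℕ) = k

/-- The value `k_{i+1}` of a chain (0-indexed access, defaulting to `k` out of range). -/
def cv {p k : ℕ} (g : Fin p → Fin (k + 1)) (i : ℕ) : ℕ :=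
  if h : i < p then (g ⟨i, h⟩ : ℕ) else k

lemma qq_pow_ne_one {m : ℕ} (hm : m ≠ 0) : qq ^ m ≠ 1 := by
  intro h
  have h2 : (algebraMap (Polynomial ℚ) F) (Polynomial.X ^ (2 * m)) =
      (algebraMap (Polynomial ℚ) F) 1 := by
    simpa [qq, qv, RatFunc.algebraMap_X, pow_mul, map_pow] using h
  have h3 := RatFunc.algebraMap_injective ℚ h2
  have := congrArg Polynomial.natDegree h3
  simp [Polynomial.natDegree_X_pow] at this
  omega

lemma one_sub_qq_pow_ne (m : ℕ) : (1 : F) - qq ^ (m + 1) ≠ 0 := by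
  have := qq_pow_ne_one (Nat.succ_ne_zero m)
  intro h
  apply this
  have : qq ^ (m + 1) = 1 := by linear_combination -h
  exact this

/-- `(q^{a+1}; q)_k`. -/
def Pp (a k : ℕ) : F := ∏ j ∈ Finset.range k, (1 - qq ^ (a + j + 1))

lemma Pp_zero (a : ℕ) : Pp a 0 = 1 := by simp [Pp]

lemma Pp_succ (a k : ℕ) : Pp a (k + 1) = Pp a k * (1 - qq ^ (a + k + 1)) :=
  Finset.prod_range_succ _ _

lemma Pp_ne_zero (a k : ℕ) : Pp a k ≠ 0 :=
  Finset.prod_ne_zero_iff.mpr fun j _ => one_sub_qq_pow_ne (a + j)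

lemma poch_eq_Pp (n : ℕ) : poch qq n = Pp 0 n := by
  unfold poch Pp
  refine Finset.prod_congr rfl fun j _ => ?_
  rw [zero_add, pow_succ, mul_comm]

lemma poch_ne_zero (n : ℕ) : poch qq n ≠ 0 := by
  rw [poch_eq_Pp]; exact Pp_ne_zero 0 n

lemma poch_succ (n : ℕ) : poch qq (n + 1) = poch qq n * (1 - qq ^ (n + 1)) := by
  rw [poch_eq_Pp, poch_eq_Pp, Pp_succ, zero_add]

lemma poch_add (a k : ℕ) : poch qq (a + k) = poch qq a * Pp a k := by
  induction k with
  | zero => simp [Pp_zero]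
  | succ k ih => rw [← Nat.add_assoc, poch_succ, ih, Pp_succ, mul_assoc,
      show a + k + 1 = a + k + 1 from rfl]
/-- Total q-binomial: `[n choose m]` for `m ≤ n`, else `0`. -/
def D (n m : ℕ) : F := if m ≤ n then poch qq n / (poch qq m * poch qq (n - m)) else 0

lemma D_eq_qbinom {n m : ℕ} (h : m ≤ n) : D n m = qbinom n m := by
  rw [D, if_pos h, qbinom]

lemma poch_zero : poch qq 0 = 1 := by simp [poch]

lemma D_zero (n : ℕ) : D n 0 = 1 := by
  rw [D, if_pos (Nat.zero_le n), Nat.sub_zero, poch_zero, one_mul,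
    div_self (poch_ne_zero n)]

lemma D_of_gt {n m : ℕ} (h : n < m) : D n m = 0 := by
  rw [D, if_neg (by omega)]

lemma D_self (n : ℕ) : D n n = 1 := by
  rw [D, if_pos le_rfl, Nat.sub_self, poch_zero, mul_one, div_self (poch_ne_zero n)]

lemma pascal (n m : ℕ) : D (n + 1) (m + 1) = D n (m + 1) + qq ^ (n - m) * D n m := by
  rcases lt_trichotomy m n with h | h | h
  · obtain ⟨t, rfl⟩ : ∃ t, n = m + t + 1 := ⟨n - m - 1, by omega⟩
    rw [D, if_pos (by omega), D, if_pos (by omega), D, if_pos (by omega)]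
    rw [show m + t + 1 + 1 - (m + 1) = t + 1 by omega,
      show m + t + 1 - (m + 1) = t by omega, show m + t + 1 - m = t + 1 by omega]
    rw [poch_succ (m + t + 1), poch_succ t, poch_succ m,
      show m + t + 1 + 1 = (m + 1) + (t + 1) by omega, pow_add]
    have h1 := one_sub_qq_pow_ne m
    have h2 := one_sub_qq_pow_ne t
    have hm := poch_ne_zero m
    have ht := poch_ne_zero t
    field_simp
    ring
  · subst h
    rw [D_self, D_of_gt (Nat.lt_succ_self m), D_self, Nat.sub_self, pow_zero]
    ring
  · rw [D_of_gt (by omega), D_of_gt (by omega), D_of_gt h]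
    ring
lemma Tlem : ∀ N c : ℕ,
    ∑ m ∈ Finset.range (N + 1), D N m * qq ^ (m * (m + c)) * Pp (m + c) (N - m) = 1 := by
  intro N
  induction N with
  | zero =>
    intro c
    simp [D_zero, Pp_zero]
  | succ N ih =>
    intro c
    rw [Finset.sum_range_succ']
    have hsplit : ∀ m ∈ Finset.range (N + 1),
        D (N + 1) (m + 1) * qq ^ ((m + 1) * (m + 1 + c)) * Pp (m + 1 + c) (N + 1 - (m + 1)) =
        D N (m + 1) * qq ^ ((m + 1) * (m + 1 + c)) * Pp (m + 1 + c) (N - m) +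
          qq ^ (N + c + 1) * (D N m * qq ^ (m * (m + (c + 1))) * Pp (m + (c + 1)) (N - m)) := by
      intro m hm
      rw [Finset.mem_range] at hm
      rw [show N + 1 - (m + 1) = N - m by omega, pascal N m]
      have hexp : N - m + (m + 1) * (m + 1 + c) = (N + c + 1) + m * (m + (c + 1)) := by
        have : (m + 1) * (m + 1 + c) = m * (m + (c + 1)) + (m + c + 1) := by ring
        omega
      have hpw : qq ^ (N - m) * qq ^ ((m + 1) * (m + 1 + c)) =
          qq ^ (N + c + 1) * qq ^ (m * (m + (c + 1))) := by
        rw [← pow_add, ← pow_add, hexp]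
      have : Pp (m + 1 + c) (N - m) = Pp (m + (c + 1)) (N - m) := by
        rw [show m + 1 + c = m + (c + 1) by omega]
      rw [this]
      calc (D N (m + 1) + qq ^ (N - m) * D N m) * qq ^ ((m + 1) * (m + 1 + c)) *
            Pp (m + (c + 1)) (N - m)
          = D N (m + 1) * qq ^ ((m + 1) * (m + 1 + c)) * Pp (m + (c + 1)) (N - m) +
            (qq ^ (N - m) * qq ^ ((m + 1) * (m + 1 + c))) *
              (D N m * Pp (m + (c + 1)) (N - m)) := by ring
        _ = _ := by rw [hpw]; ring
    rw [Finset.sum_congr rfl hsplit, Finset.sum_add_distrib, ← Finset.mul_sum, ih (c + 1)]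
    -- remaining: ∑ first pieces + qq^(N+c+1) * 1 + (m = 0 term) = 1
    have hfirst : ∀ m ∈ Finset.range (N + 1),
        D N (m + 1) * qq ^ ((m + 1) * (m + 1 + c)) * Pp (m + 1 + c) (N - m) =
        (1 - qq ^ (N + c + 1)) *
          (D N (m + 1) * qq ^ ((m + 1) * (m + 1 + c)) * Pp (m + 1 + c) (N - (m + 1))) := by
      intro m hm
      rw [Finset.mem_range] at hm
      rcases Nat.lt_or_ge m N with hlt | hge
      · rw [show N - m = (N - (m + 1)) + 1 by omega, Pp_succ,
          show m + 1 + c + (N - (m + 1)) + 1 = N + c + 1 by omega]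
        ring
      · have hmN : m = N := by omega
        rw [hmN, D_of_gt (Nat.lt_succ_self N)]
        ring
    rw [Finset.sum_congr rfl hfirst, ← Finset.mul_sum]
    have hT := ih c
    rw [Finset.sum_range_succ'] at hT
    -- hT : ∑ m ∈ range N, (succ terms) + (m=0 term of T N c) = 1
    have h0N : D N 0 * qq ^ (0 * (0 + c)) * Pp (0 + c) (N - 0) = Pp c N := by
      rw [D_zero]; simp
    have h0N1 : D (N + 1) 0 * qq ^ (0 * (0 + c)) * Pp (0 + c) (N + 1 - 0) = Pp c (N + 1) := by
      rw [D_zero]; simp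
    rw [h0N] at hT
    rw [h0N1, Pp_succ, show c + N + 1 = N + c + 1 by omega]
    -- goal : (1 - q^{N+c+1}) * S + q^{N+c+1} * 1 + Pp c N * (1 - q^{N+c+1}) = 1
    -- with S = ∑ succ-terms of T N c, and hT : S' + Pp c N = 1 where S' is over range N
    have hSS : ∑ m ∈ Finset.range (N + 1),
        D N (m + 1) * qq ^ ((m + 1) * (m + 1 + c)) * Pp (m + 1 + c) (N - (m + 1)) =
        ∑ m ∈ Finset.range N,
        D N (m + 1) * qq ^ ((m + 1) * (m + 1 + c)) * Pp (m + 1 + c) (N - (m + 1)) := by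
      rw [Finset.sum_range_succ, D_of_gt (Nat.lt_succ_self N)]
      ring
    rw [hSS]
    have hS : ∑ m ∈ Finset.range N,
        D N (m + 1) * qq ^ ((m + 1) * (m + 1 + c)) * Pp (m + 1 + c) (N - (m + 1)) =
        1 - Pp c N := by linear_combination hT
    rw [hS]
    ring
lemma core (N c : ℕ) :
    ∑ m ∈ Finset.range (N + 1),
      qq ^ (m * (m + c)) / (poch qq m * poch qq (N - m) * poch qq (m + c)) =
    1 / (poch qq N * poch qq (N + c)) := by
  have key : ∑ m ∈ Finset.range (N + 1),
      qq ^ (m * (m + c)) / (poch qq m * poch qq (N - m) * poch qq (m + c)) *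
        (poch qq N * poch qq (N + c)) = 1 := by
    rw [← Tlem N c]
    refine Finset.sum_congr rfl fun m hm => ?_
    rw [Finset.mem_range] at hm
    have hmN : m ≤ N := by omega
    have hNc : poch qq (N + c) = poch qq (m + c) * Pp (m + c) (N - m) := by
      rw [← poch_add, show m + c + (N - m) = N + c by omega]
    have hD : D N m = poch qq N / (poch qq m * poch qq (N - m)) := by
      rw [D, if_pos hmN]
    rw [hNc, hD]
    have h1 := poch_ne_zero m
    have h2 := poch_ne_zero (N - m)
    have h3 := poch_ne_zero (m + c)
    field_simp
  rw [← Finset.sum_mul] at key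
  rw [eq_div_iff (mul_ne_zero (poch_ne_zero N) (poch_ne_zero (N + c)))]
  exact key
lemma step (γ : ℕ → F) (k : ℕ) :
    ∑ j ∈ Finset.range (k + 1), qq ^ (j ^ 2 + j) * qbinom k j *
      (poch qq j * ∑ l ∈ Finset.range (j + 1), γ l / (poch qq (j - l) * poch qq (j + l + 1))) =
    poch qq k * ∑ l ∈ Finset.range (k + 1),
      qq ^ (l ^ 2 + l) * γ l / (poch qq (k - l) * poch qq (k + l + 1)) := by
  calc ∑ j ∈ Finset.range (k + 1), qq ^ (j ^ 2 + j) * qbinom k j *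
        (poch qq j * ∑ l ∈ Finset.range (j + 1), γ l / (poch qq (j - l) * poch qq (j + l + 1)))
      = ∑ j ∈ Finset.range (k + 1), ∑ l ∈ Finset.range (k + 1),
          (if l ≤ j then qq ^ (j ^ 2 + j) * qbinom k j * poch qq j *
            (γ l / (poch qq (j - l) * poch qq (j + l + 1))) else 0) := by
        refine Finset.sum_congr rfl fun j hj => ?_
        rw [Finset.mem_range] at hj
        have hr : Finset.range (j + 1) = Finset.filter (fun l => l ≤ j) (Finset.range (k + 1)) := by
          ext x; simp [Finset.mem_filter]; omega
        rw [Finset.mul_sum, Finset.mul_sum, hr, Finset.sum_filter]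
        refine Finset.sum_congr rfl fun l _ => ?_
        by_cases h : l ≤ j <;> simp [h] <;> ring
    _ = ∑ l ∈ Finset.range (k + 1), ∑ j ∈ Finset.range (k + 1),
          (if l ≤ j then qq ^ (j ^ 2 + j) * qbinom k j * poch qq j *
            (γ l / (poch qq (j - l) * poch qq (j + l + 1))) else 0) := Finset.sum_comm
    _ = ∑ l ∈ Finset.range (k + 1), poch qq k *
          (qq ^ (l ^ 2 + l) * γ l / (poch qq (k - l) * poch qq (k + l + 1))) := by
        refine Finset.sum_congr rfl fun l hl => ?_
        rw [Finset.mem_range] at hl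
        have hlk : l ≤ k := by omega
        rw [← Finset.sum_filter]
        have hico : Finset.filter (fun j => l ≤ j) (Finset.range (k + 1)) =
            Finset.Ico l (k + 1) := by
          ext x; simp [Finset.mem_filter]; omega
        rw [hico, Finset.sum_Ico_eq_sum_range, show k + 1 - l = (k - l) + 1 by omega]
        have hterm : ∀ m ∈ Finset.range ((k - l) + 1),
            qq ^ ((l + m) ^ 2 + (l + m)) * qbinom k (l + m) * poch qq (l + m) *
              (γ l / (poch qq ((l + m) - l) * poch qq ((l + m) + l + 1))) =
            (poch qq k * (qq ^ (l ^ 2 + l) * γ l)) *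
              (qq ^ (m * (m + (2 * l + 1))) /
                (poch qq m * poch qq ((k - l) - m) * poch qq (m + (2 * l + 1)))) := by
          intro m hm
          rw [Finset.mem_range] at hm
          rw [show (l + m) - l = m by omega, show (l + m) + l + 1 = m + (2 * l + 1) by omega,
            qbinom, show k - (l + m) = (k - l) - m by omega,
            show (l + m) ^ 2 + (l + m) = (l ^ 2 + l) + m * (m + (2 * l + 1)) by ring, pow_add]
          have h1 := poch_ne_zero (l + m)
          have h2 := poch_ne_zero m
          have h3 := poch_ne_zero ((k - l) - m)
          have h4 := poch_ne_zero (m + (2 * l + 1))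
          field_simp
        rw [Finset.sum_congr rfl hterm, ← Finset.mul_sum, core (k - l) (2 * l + 1),
          show k - l + (2 * l + 1) = k + l + 1 by omega]
        ring
    _ = poch qq k * ∑ l ∈ Finset.range (k + 1),
          qq ^ (l ^ 2 + l) * γ l / (poch qq (k - l) * poch qq (k + l + 1)) := by
        rw [Finset.mul_sum]
lemma mem_chains {p k : ℕ} {g : Fin p → Fin (k + 1)} :
    g ∈ chains p k ↔ (∀ i j : Fin p, i ≤ j → g i ≤ g j) ∧
      ∀ i : Fin p, (i : ℕ) = p - 1 → (g i : ℕ) = k := by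
  simp [chains]

lemma cv_lt {p k : ℕ} (g : Fin p → Fin (k + 1)) {i : ℕ} (h : i < p) :
    cv g i = (g ⟨i, h⟩ : ℕ) := dif_pos h

lemma chain_split (p k : ℕ) (hp : 1 ≤ p) (C : ℕ → F) :
    ∑ g ∈ chains (p + 1) k,
      (∏ i ∈ Finset.range p,
        qq ^ (cv g i ^ 2 + cv g i) * qbinom (cv g (i + 1)) (cv g i)) * C (cv g 0) =
    ∑ j ∈ Finset.range (k + 1), qq ^ (j ^ 2 + j) * qbinom k j *
      ∑ g ∈ chains p j,
        (∏ i ∈ Finset.range (p - 1),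
          qq ^ (cv g i ^ 2 + cv g i) * qbinom (cv g (i + 1)) (cv g i)) * C (cv g 0) := by
  have hp1 : p - 1 < p + 1 := by omega
  have hp1' : p - 1 < p := by omega
  rw [← Finset.sum_fiberwise_of_maps_to
    (g := fun g : Fin (p + 1) → Fin (k + 1) => ((g ⟨p - 1, hp1⟩ : Fin (k + 1)) : ℕ))
    (t := Finset.range (k + 1))
    (fun g _ => Finset.mem_range.mpr (g ⟨p - 1, hp1⟩).isLt)]
  refine Finset.sum_congr rfl fun j hj => ?_
  rw [Finset.mem_range] at hj
  have hjk : j ≤ k := by omega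
  rw [Finset.mul_sum]
  refine Finset.sum_nbij'
    (i := fun g => fun i : Fin p =>
      (⟨min (g ⟨(i : ℕ), by omega⟩ : ℕ) j, Nat.lt_succ_of_le (Nat.min_le_right _ _)⟩ : Fin (j + 1)))
    (j := fun g' => fun i : Fin (p + 1) =>
      if h : (i : ℕ) < p then
        (⟨min (g' ⟨(i : ℕ), h⟩ : ℕ) k, Nat.lt_succ_of_le (Nat.min_le_right _ _)⟩ : Fin (k + 1))
      else Fin.last k)
    ?_ ?_ ?_ ?_ ?_
  · -- forward maps into chains p j
    intro g hg
    rw [Finset.mem_filter] at hg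
    obtain ⟨hg1, hg2⟩ := hg
    rw [mem_chains] at hg1 ⊢
    obtain ⟨hmono, _⟩ := hg1
    constructor
    · intro i i' hii'
      simp only [Fin.mk_le_mk]
      exact min_le_min ((Fin.le_def ..).mp (hmono _ _ (by
        simp only [Fin.mk_le_mk]; exact (Fin.le_def ..).mp hii'))) le_rfl
    · intro i hi
      simp only
      have : (⟨(i : ℕ), by omega⟩ : Fin (p + 1)) = ⟨p - 1, hp1⟩ := by
        simp [Fin.ext_iff, hi]
      rw [this, hg2]
      omega
  · -- backward maps into the fiber
    intro g' hg'
    rw [mem_chains] at hg'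
    obtain ⟨hmono, hlast⟩ := hg'
    rw [Finset.mem_filter, mem_chains]
    refine ⟨⟨?_, ?_⟩, ?_⟩
    · intro i i' hii'
      have hii : (i : ℕ) ≤ (i' : ℕ) := (Fin.le_def ..).mp hii'
      by_cases h : (i : ℕ) < p
      · by_cases h' : (i' : ℕ) < p
        · simp only [dif_pos h, dif_pos h', Fin.mk_le_mk]
          exact min_le_min ((Fin.le_def ..).mp (hmono _ _ (by
            simp only [Fin.mk_le_mk]; exact hii))) le_rfl
        · simp only [dif_pos h, dif_neg h']
          exact Fin.le_last _
      · have h' : ¬ (i' : ℕ) < p := by omega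
        simp only [dif_neg h, dif_neg h', le_refl]
    · intro i hi
      have h : ¬ (i : ℕ) < p := by omega
      simp [dif_neg h]
    · have h : p - 1 < p := hp1'
      simp only [dif_pos h]
      have := hlast ⟨p - 1, h⟩ rfl
      simp [this, Nat.min_eq_left hjk]
  · -- left inverse
    intro g hg
    rw [Finset.mem_filter] at hg
    obtain ⟨hg1, hg2⟩ := hg
    rw [mem_chains] at hg1
    obtain ⟨hmono, hlast⟩ := hg1
    funext i
    by_cases h : (i : ℕ) < p
    · simp only [dif_pos h]
      apply Fin.ext
      simp only
      have hidx : (⟨(i : ℕ), by omega⟩ : Fin (p + 1)) = i := by simp [Fin.ext_iff]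
      have hle : (g i : ℕ) ≤ j := by
        rw [← hg2]
        exact (Fin.le_def ..).mp (hmono i ⟨p - 1, hp1⟩ (by
          simp only [Fin.le_def]; omega))
      rw [hidx]
      have hlek : (g i : ℕ) ≤ k := by omega
      omega
    · have hval : (g i : ℕ) = k := hlast i (by omega)
      simp only [dif_neg h]
      apply Fin.ext
      simp [hval, Fin.last]
  · -- right inverse
    intro g' hg'
    rw [mem_chains] at hg'
    obtain ⟨hmono, hlast⟩ := hg'
    funext i
    obtain ⟨iv, hiv⟩ := i
    apply Fin.ext
    simp only
    split_ifs
    have h1 : (g' ⟨iv, hiv⟩ : ℕ) < j + 1 := (g' ⟨iv, hiv⟩).isLt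
    simp only [Fin.val_mk] at h1 ⊢
    omega
  · -- values agree
    intro g hg
    rw [Finset.mem_filter] at hg
    obtain ⟨hg1, hg2⟩ := hg
    rw [mem_chains] at hg1
    obtain ⟨hmono, hlast⟩ := hg1
    have hcvle : ∀ i : ℕ, i < p → cv g i ≤ j := by
      intro i hi
      rw [cv_lt g (by omega : i < p + 1), ← hg2]
      exact (Fin.le_def ..).mp (hmono ⟨i, by omega⟩ ⟨p - 1, hp1⟩ (by
        simp only [Fin.le_def]; omega))
    have hcveq : ∀ i : ℕ, i < p → cv (fun i : Fin p =>
        (⟨min (g ⟨(i : ℕ), by omega⟩ : ℕ) j, Nat.lt_succ_of_le (Nat.min_le_right _ _)⟩ :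
          Fin (j + 1))) i = cv g i := by
      intro i hi
      rw [cv_lt _ hi, cv_lt g (by omega : i < p + 1)]
      simp only
      have := hcvle i hi
      rw [cv_lt g (by omega : i < p + 1)] at this
      omega
    have hsplit : (∏ i ∈ Finset.range p,
        qq ^ (cv g i ^ 2 + cv g i) * qbinom (cv g (i + 1)) (cv g i)) =
        (∏ i ∈ Finset.range (p - 1),
          qq ^ (cv g i ^ 2 + cv g i) * qbinom (cv g (i + 1)) (cv g i)) *
        (qq ^ (j ^ 2 + j) * qbinom k j) := by
      have hps := Finset.prod_range_succ
        (f := fun i => qq ^ (cv g i ^ 2 + cv g i) * qbinom (cv g (i + 1)) (cv g i)) (n := p - 1)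
      rw [show (p - 1) + 1 = p by omega] at hps
      have e1 : cv g (p - 1) = j := by rw [cv_lt g (by omega : p - 1 < p + 1), hg2]
      have e2 : cv g p = k := by
        rw [cv_lt g (by omega : p < p + 1)]
        exact hlast ⟨p, by omega⟩ (by simp)
      rw [hps, e1, e2]
    have key : ∀ f' : Fin p → Fin (j + 1), (∀ i : ℕ, i < p → cv f' i = cv g i) →
        qq ^ (j ^ 2 + j) * qbinom k j *
          ((∏ i ∈ Finset.range (p - 1),
            qq ^ (cv f' i ^ 2 + cv f' i) * qbinom (cv f' (i + 1)) (cv f' i)) * C (cv f' 0)) =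
        (∏ i ∈ Finset.range (p - 1),
          qq ^ (cv g i ^ 2 + cv g i) * qbinom (cv g (i + 1)) (cv g i)) *
          (qq ^ (j ^ 2 + j) * qbinom k j) * C (cv g 0) := by
      intro f' hf'
      have hprod : (∏ i ∈ Finset.range (p - 1),
          qq ^ (cv f' i ^ 2 + cv f' i) * qbinom (cv f' (i + 1)) (cv f' i)) =
          ∏ i ∈ Finset.range (p - 1),
          qq ^ (cv g i ^ 2 + cv g i) * qbinom (cv g (i + 1)) (cv g i) := by
        refine Finset.prod_congr rfl fun i hi => ?_
        rw [Finset.mem_range] at hi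
        rw [hf' i (by omega), hf' (i + 1) (by omega)]
      rw [hprod, hf' 0 (by omega)]
      ring
    rw [hsplit]
    exact (key _ hcveq).symm

/-- Iterated Bailey chain identity: if `B_n = (q;q)_n Σ_{l=0}^n α_l/((q;q)_{n-l}(q;q)_{n+l+1})`,
then for `p ≥ 1`,
`(q;q)_k Σ_{l=0}^k q^{(l²+l)(p-1)} α_l/((q;q)_{k-l}(q;q)_{k+l+1})` equals the multiple sum
over chains of length `p` ending at `k`. -/
theorem stmt14 (α B : ℕ → F)
    (hB : ∀ n, B n = poch qq n * ∑ l ∈ Finset.range (n + 1),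
      α l / (poch qq (n - l) * poch qq (n + l + 1)))
    (p k : ℕ) (hp : 1 ≤ p) :
    poch qq k * ∑ l ∈ Finset.range (k + 1),
        qq ^ ((l ^ 2 + l) * (p - 1)) * α l / (poch qq (k - l) * poch qq (k + l + 1)) =
      ∑ g ∈ chains p k,
        (∏ i ∈ Finset.range (p - 1),
          qq ^ (cv g i ^ 2 + cv g i) * qbinom (cv g (i + 1)) (cv g i)) * B (cv g 0) := by
  induction p, hp using Nat.le_induction generalizing k with
  | base =>
    have hch : chains 1 k = {fun _ : Fin 1 => Fin.last k} := by
      ext g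
      rw [mem_chains, Finset.mem_singleton]
      constructor
      · rintro ⟨-, h2⟩
        funext i
        apply Fin.ext
        rw [h2 i (by omega)]
        rfl
      · rintro rfl
        exact ⟨fun i j _ => le_rfl, fun i _ => rfl⟩
    rw [hch, Finset.sum_singleton]
    have hcv : cv (fun _ : Fin 1 => Fin.last k) 0 = k := by
      rw [cv_lt _ (by omega : 0 < 1)]; rfl
    simp only [Nat.sub_self, Nat.mul_zero, pow_zero, one_mul, Finset.range_zero,
      Finset.prod_empty, hcv]
    exact (hB k).symm
  | succ p hp ih =>
    simp only [Nat.add_sub_cancel]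
    rw [chain_split p k hp B]
    have hstep : ∑ j ∈ Finset.range (k + 1), qq ^ (j ^ 2 + j) * qbinom k j *
        (poch qq j * ∑ l ∈ Finset.range (j + 1),
          qq ^ ((l ^ 2 + l) * (p - 1)) * α l / (poch qq (j - l) * poch qq (j + l + 1))) =
        poch qq k * ∑ l ∈ Finset.range (k + 1),
          qq ^ ((l ^ 2 + l) * p) * α l / (poch qq (k - l) * poch qq (k + l + 1)) := by
      have h := step (fun l => qq ^ ((l ^ 2 + l) * (p - 1)) * α l) k
      rw [h]
      refine congrArg _ (Finset.sum_congr rfl fun l _ => ?_)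
      have e : (l ^ 2 + l) + (l ^ 2 + l) * (p - 1) = (l ^ 2 + l) * p := by
        have hp' : p - 1 + 1 = p := by omega
        calc (l ^ 2 + l) + (l ^ 2 + l) * (p - 1) = (l ^ 2 + l) * ((p - 1) + 1) := by ring
          _ = (l ^ 2 + l) * p := by rw [hp']
      rw [← mul_assoc, ← pow_add, e]
    have hinner : ∀ j ∈ Finset.range (k + 1),
        qq ^ (j ^ 2 + j) * qbinom k j * (∑ g ∈ chains p j,
          (∏ i ∈ Finset.range (p - 1),
            qq ^ (cv g i ^ 2 + cv g i) * qbinom (cv g (i + 1)) (cv g i)) * B (cv g 0)) =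
        qq ^ (j ^ 2 + j) * qbinom k j * (poch qq j * ∑ l ∈ Finset.range (j + 1),
          qq ^ ((l ^ 2 + l) * (p - 1)) * α l / (poch qq (j - l) * poch qq (j + l + 1))) := by
      intro j _
      rw [← ih j]
    rw [Finset.sum_congr rfl hinner, hstep]
end
end
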